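/- Let n ≥ 2 and let Δ_n = {x ∈ ℝ^n : x_j ≥ 0 for all j, Σ_{j=1}^n x_j ≤ 1}. Then for every x ∈ Δ_n, min_{1≤j≤n} x_j − ∏_{j=1}^n x_j^{α_j} ≤ (∏_j α_j^{α_j})^{1/d}/d − (∏_j α_j^{α_j})/d^d, and the supremum over Δ_n of the left-hand side equals this bound if and only if α_1 = α_2 = ⋯ = α_n. -/

import Mathlib

open Real Finset


lemma nb (x y : ℕ) : ∀ k : ℕ, x ^ (k+1) + (k+1) * y * x ^ k ≤ (x + y) ^ (k+1) := by
  intro k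
  induction k with
  | zero => simp
  | succ k ih =>
    have h3 : (x ^ (k+1) + (k+1) * y * x ^ k) * (x + y) ≤ (x + y) ^ (k+2) := by
      rw [pow_succ]
      exact Nat.mul_le_mul_right _ ih
    refine le_trans ?_ h3
    have h4 : (x ^ (k+1) + (k+1) * y * x ^ k) * (x + y)
        = x ^ (k+2) + (k+1) * y * x ^ (k+1) + y * x ^ (k+1) + (k+1) * (y * y * x ^ k) := by
      ring
    have h5 : x ^ (k + 2) + (k + 2) * y * x ^ (k+1)
        = x ^ (k+2) + (k+1) * y * x ^ (k+1) + y * x ^ (k+1) := by ring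
    rw [h4, h5]
    omega

lemma twovar {a b : ℕ} (ha : 1 ≤ a) (hb : 1 ≤ b) :
    a ^ a * b ^ b ≤ (a + b - 1) ^ (a + b - 1) := by
  obtain ⟨a, rfl⟩ : ∃ a', a = a' + 1 := ⟨a - 1, by omega⟩
  obtain ⟨b, rfl⟩ : ∃ b', b = b' + 1 := ⟨b - 1, by omega⟩
  have hc : a + 1 + (b + 1) - 1 = a + b + 1 := by omega
  rw [hc]
  set c := a + b + 1 with hcdef
  have h2 : (a + 1) * (b+1) ^ (b+1) ≤ c ^ (b+1) := by
    have h := nb (b+1) a b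
    have heq : (b+1) ^ (b+1) + (b+1) * a * (b+1) ^ b = (a + 1) * (b+1) ^ (b+1) := by
      have hh : (b+1) * (b+1) ^ b = (b+1) ^ (b+1) := by ring
      calc (b+1) ^ (b+1) + (b+1) * a * (b+1) ^ b
          = (b+1) ^ (b+1) + a * ((b+1) * (b+1) ^ b) := by ring
        _ = (b+1) ^ (b+1) + a * (b+1) ^ (b+1) := by rw [hh]
        _ = (a + 1) * (b+1) ^ (b+1) := by ring
    rw [heq] at h
    have hbc : b + 1 + a = c := by omega
    rwa [hbc] at h
  calc (a+1) ^ (a+1) * (b+1) ^ (b+1) = (a+1) ^ a * ((a+1) * (b+1) ^ (b+1)) := by ring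
    _ ≤ c ^ a * c ^ (b+1) :=
        Nat.mul_le_mul (Nat.pow_le_pow_left (by omega) _) h2
    _ = c ^ c := by rw [← pow_add]; congr 1

lemma prodbound {ι : Type*} {s : Finset ι} (f : ι → ℕ) (hs : s.Nonempty) :
    (∀ i ∈ s, 1 ≤ f i) →
    ∏ i ∈ s, f i ^ f i ≤ (∑ i ∈ s, f i - s.card + 1) ^ (∑ i ∈ s, f i - s.card + 1) := by
  classical
  induction hs using Finset.Nonempty.cons_induction with
  | singleton a =>
    intro hf
    have h1 := hf a (Finset.mem_singleton_self a)
    simp [Nat.sub_add_cancel h1]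
  | cons a s ha hs ih =>
    intro hf
    have hfa : 1 ≤ f a := hf a (Finset.mem_cons_self a s)
    have hf' : ∀ i ∈ s, 1 ≤ f i := fun i hi => hf i (Finset.mem_cons_of_mem hi)
    have hcard : s.card ≤ ∑ i ∈ s, f i := by
      calc s.card = ∑ _i ∈ s, 1 := by simp
        _ ≤ ∑ i ∈ s, f i := Finset.sum_le_sum fun i hi => hf' i hi
    have hcard1 : 1 ≤ s.card := Finset.card_pos.mpr hs
    rw [Finset.prod_cons, Finset.sum_cons, Finset.card_cons]
    set S := ∑ i ∈ s, f i
    set c := s.card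
    have key := twovar hfa (show 1 ≤ S - c + 1 by omega)
    have h1 : f a ^ f a * ∏ i ∈ s, f i ^ f i ≤ f a ^ f a * (S - c + 1) ^ (S - c + 1) :=
      Nat.mul_le_mul_left _ (ih hf')
    have heq : f a + (S - c + 1) - 1 = f a + S - (c + 1) + 1 := by omega
    rw [heq] at key
    exact le_trans h1 key

/-- Key nat inequality: `(∏ αⱼ^αⱼ)^(d-1) ≤ d^((d-2)*d)` for `n ≥ 2`. -/
lemma natkey {n : ℕ} (hn : 2 ≤ n) (α : Fin n → ℕ) (hα : ∀ j, 1 ≤ α j)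
    {d : ℕ} (hd : d = ∑ j, α j) (hd2 : 2 ≤ d) :
    (∏ j, α j ^ α j) ^ (d - 1) ≤ d ^ ((d - 2) * d) := by
  have : Nonempty (Fin n) := ⟨⟨0, by omega⟩⟩
  have hne : (Finset.univ : Finset (Fin n)).Nonempty := Finset.univ_nonempty
  have hL : ∏ j, α j ^ α j ≤ (d - 1) ^ (d - 1) := by
    have h := prodbound α hne (fun i _ => hα i)
    rw [Finset.card_univ, Fintype.card_fin, ← hd] at h
    have hnd : n ≤ d := by
      rw [hd]
      calc n = ∑ _j : Fin n, 1 := by simp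
        _ ≤ ∑ j, α j := Finset.sum_le_sum fun i _ => hα i
    refine le_trans h ?_
    have h1 : d - n + 1 ≤ d - 1 := by omega
    calc (d - n + 1) ^ (d - n + 1) ≤ (d-1) ^ (d - n + 1) := Nat.pow_le_pow_left h1 _
      _ ≤ (d-1) ^ (d-1) := Nat.pow_le_pow_right (by omega) h1
  obtain ⟨e, rfl⟩ : ∃ e, d = e + 2 := ⟨d - 2, by omega⟩
  set m := e + 1 with hm
  have hd1 : e + 2 - 1 = m := by omega
  have hd2' : e + 2 - 2 = e := by omega
  rw [hd1] at hL ⊢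
  rw [hd2']
  set Pn := ∏ j, α j ^ α j with hPn
  have hstep : Pn ^ m ≤ m ^ (m * m) := by
    calc Pn ^ m ≤ (m ^ m) ^ m := Nat.pow_le_pow_left hL m
      _ = m ^ (m * m) := by rw [← pow_mul]
  have hbern : (m + 1) * m ^ (m * m) ≤ (m + 1) ^ (m * m) := by
    have hk : m * m = (e * e + 2 * e) + 1 := by ring
    set k := e * e + 2 * e with hkdef
    have h := nb m 1 k
    have heq : m ^ (k+1) + (k+1) * 1 * m ^ k = (m + 1) * m ^ (k + 1) := by
      have h1 : (k + 1) * 1 * m ^ k = m * m ^ (k + 1) := by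
        have h2 : m * m ^ (k+1) = (m * m) * m ^ k := by ring
        rw [h2, hk]; ring
      rw [h1]; ring
    rw [heq] at h
    rw [hk]
    simpa using h
  have hchain : (m+1) * Pn ^ m ≤ (m+1) * (m+1) ^ (e * (e + 2)) := by
    have h1 : (m+1) * Pn ^ m ≤ (m+1) * m ^ (m*m) := Nat.mul_le_mul_left _ hstep
    have h2 : (m + 1) ^ (m * m) = (m+1) * (m+1) ^ (e * (e+2)) := by
      have : m * m = e * (e + 2) + 1 := by rw [hm]; ring
      rw [this, pow_succ]; ring
    rw [← h2]
    exact le_trans h1 hbern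
  have := Nat.le_of_mul_le_mul_left hchain (by omega : 0 < m + 1)
  have hme : m + 1 = e + 2 := by omega
  rwa [hme] at this


lemma jensen_log {n d : ℕ} (hn : 2 ≤ n) (α : Fin n → ℕ) (hα : ∀ j, 1 ≤ α j)
    (hd : d = ∑ j, α j) :
    -(1 / (d:ℝ)) * Real.log (∏ j, (α j : ℝ) ^ α j) ≤ Real.log ((n : ℝ) / d) ∧
    ((∃ i j, α i ≠ α j) →
      -(1 / (d:ℝ)) * Real.log (∏ j, (α j : ℝ) ^ α j) < Real.log ((n : ℝ) / d)) := by
  have hnne : Nonempty (Fin n) := ⟨⟨0, by omega⟩⟩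
  have hα0 : ∀ j, (0:ℝ) < (α j : ℝ) := fun j => by exact_mod_cast hα j
  have hd1 : 1 ≤ d := by
    rw [hd]
    have : (1:ℕ) ≤ ∑ j : Fin n, 1 := by simp; omega
    exact le_trans this (Finset.sum_le_sum fun j _ => hα j)
  have hd0 : (0:ℝ) < d := by exact_mod_cast hd1
  have hdsum : ((d:ℝ)) = ∑ j, (α j : ℝ) := by rw [hd]; push_cast; rfl
  set w : Fin n → ℝ := fun j => (α j : ℝ) / d with hw
  set p : Fin n → ℝ := fun j => ((α j : ℝ))⁻¹ with hp
  have h₀ : ∀ i ∈ Finset.univ, (0:ℝ) < w i := fun i _ =>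
    div_pos (hα0 i) hd0
  have h₁ : ∑ j, w j = 1 := by
    simp only [hw, ← Finset.sum_div, ← hdsum]
    field_simp
  have hmem : ∀ i ∈ Finset.univ, p i ∈ Set.Ioi (0:ℝ) := fun i _ =>
    Set.mem_Ioi.mpr (inv_pos.mpr (hα0 i))
  have hsum_p : ∑ j, w j • p j = (n:ℝ) / d := by
    simp only [smul_eq_mul, hw, hp]
    have h : ∀ j ∈ Finset.univ, (α j : ℝ) / d * ((α j : ℝ))⁻¹ = 1 / d := fun j _ => by
      field_simp [(hα0 j).ne']
    rw [Finset.sum_congr rfl h, Finset.sum_const, Finset.card_univ, Fintype.card_fin,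
      nsmul_eq_mul]
    ring
  have hlhs : ∑ j, w j • Real.log (p j) = -(1 / (d:ℝ)) * Real.log (∏ j, (α j : ℝ) ^ α j) := by
    have hlogP : Real.log (∏ j, (α j : ℝ) ^ α j) = ∑ j, (α j : ℝ) * Real.log (α j) := by
      rw [Real.log_prod (fun j _ => (pow_pos (hα0 j) _).ne')]
      simp [Real.log_pow]
    rw [hlogP, Finset.mul_sum]
    refine Finset.sum_congr rfl fun j _ => ?_
    simp only [smul_eq_mul, hw, hp, Real.log_inv]
    ring
  constructor
  · have h := strictConcaveOn_log_Ioi.concaveOn.le_map_sum (fun i hi => (h₀ i hi).le) h₁ hmem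
    rw [hsum_p] at h
    rw [← hlhs]
    exact h
  · rintro ⟨i, j, hij⟩
    have hpij : p i ≠ p j := by
      simp only [hp]
      intro h
      exact hij (by exact_mod_cast inv_inj.mp h)
    have h := strictConcaveOn_log_Ioi.lt_map_sum h₀ h₁ hmem
      ⟨i, Finset.mem_univ i, j, Finset.mem_univ j, hpij⟩
    rw [hsum_p] at h
    rw [← hlhs]
    exact h


/-- Monotonicity of `s ↦ s - s^d` where `d * b^(d-1) ≤ 1`. -/
lemma fmono {d : ℕ} (hd2 : 2 ≤ d) {a b : ℝ} (ha : 0 ≤ a) (hab : a ≤ b)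
    (hb : (d : ℝ) * b ^ (d - 1) ≤ 1) : a - a ^ d ≤ b - b ^ d := by
  have hb0 : 0 ≤ b := ha.trans hab
  have hgeom := geom_sum₂_mul b a d
  have hsum : ∑ i ∈ Finset.range d, b ^ i * a ^ (d - 1 - i) ≤ (d : ℝ) * b ^ (d - 1) := by
    calc ∑ i ∈ Finset.range d, b ^ i * a ^ (d - 1 - i)
        ≤ ∑ _i ∈ Finset.range d, b ^ (d - 1) := by
          refine Finset.sum_le_sum fun i hi => ?_
          have hi' : i ≤ d - 1 := by
            have := Finset.mem_range.mp hi; omega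
          calc b ^ i * a ^ (d - 1 - i) ≤ b ^ i * b ^ (d - 1 - i) := by
                refine mul_le_mul_of_nonneg_left (pow_le_pow_left₀ ha hab _) (by positivity)
            _ = b ^ (d - 1) := by rw [← pow_add]; congr 1; omega
      _ = (d : ℝ) * b ^ (d - 1) := by
          rw [Finset.sum_const, Finset.card_range, nsmul_eq_mul]
  have h1 : b ^ d - a ^ d ≤ 1 * (b - a) := by
    rw [← hgeom]
    exact mul_le_mul_of_nonneg_right (hsum.trans hb) (by linarith)
  linarith

/-- Strict monotonicity version. -/
lemma fmono_strict {d : ℕ} (hd2 : 2 ≤ d) {a b : ℝ} (ha : 0 ≤ a) (hab : a < b)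
    (hb : (d : ℝ) * b ^ (d - 1) ≤ 1) : a - a ^ d < b - b ^ d := by
  have hb0 : 0 < b := ha.trans_lt hab
  have hgeom := geom_sum₂_mul b a d
  have hd0 : 0 < d := by omega
  have hsum : ∑ i ∈ Finset.range d, b ^ i * a ^ (d - 1 - i) < (d : ℝ) * b ^ (d - 1) := by
    have h := Finset.sum_lt_sum
      (f := fun i => b ^ i * a ^ (d - 1 - i)) (g := fun _ => b ^ (d - 1))
      (s := Finset.range d)
      (fun i hi => by
        have hi' : i ≤ d - 1 := by
          have := Finset.mem_range.mp hi; omega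
        calc b ^ i * a ^ (d - 1 - i) ≤ b ^ i * b ^ (d - 1 - i) := by
              refine mul_le_mul_of_nonneg_left (pow_le_pow_left₀ ha hab.le _) (by positivity)
          _ = b ^ (d - 1) := by rw [← pow_add]; congr 1; omega)
      ⟨0, Finset.mem_range.mpr hd0, by
        simp only [pow_zero, one_mul, Nat.sub_zero]
        exact pow_lt_pow_left₀ hab ha (by omega)⟩
    calc ∑ i ∈ Finset.range d, b ^ i * a ^ (d - 1 - i)
        < ∑ _i ∈ Finset.range d, b ^ (d - 1) := h
      _ = (d : ℝ) * b ^ (d - 1) := by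
          rw [Finset.sum_const, Finset.card_range, nsmul_eq_mul]
  have h1 : b ^ d - a ^ d < 1 * (b - a) := by
    rw [← hgeom]
    exact mul_lt_mul_of_pos_right (hsum.trans_le hb) (by linarith)
  linarith


set_option maxHeartbeats 1000000 in
/-- Error of the overestimator `min_j x_j` over the standard simplex, tight iff symmetric. -/
theorem stmt11 (n : ℕ) (hn : 2 ≤ n) (α : Fin n → ℕ) (hα : ∀ j, 1 ≤ α j)
    (d : ℕ) (hd : d = ∑ j, α j) (hd2 : 2 ≤ d) :
    (∀ x : Fin n → ℝ, (∀ j, 0 ≤ x j) → ∑ j, x j ≤ 1 →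
      (⨅ j, x j) - ∏ j, x j ^ α j ≤
        (∏ j, (α j : ℝ) ^ α j) ^ ((1 : ℝ) / (d : ℝ)) / (d : ℝ)
          - (∏ j, (α j : ℝ) ^ α j) / (d : ℝ) ^ d) ∧
    (sSup ((fun x : Fin n → ℝ => (⨅ j, x j) - ∏ j, x j ^ α j) ''
        {x : Fin n → ℝ | (∀ j, 0 ≤ x j) ∧ ∑ j, x j ≤ 1}) =
        (∏ j, (α j : ℝ) ^ α j) ^ ((1 : ℝ) / (d : ℝ)) / (d : ℝ)
          - (∏ j, (α j : ℝ) ^ α j) / (d : ℝ) ^ d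
      ↔ ∀ i j, α i = α j) := by
  have hnne : Nonempty (Fin n) := ⟨⟨0, by omega⟩⟩
  have hα0 : ∀ j, (0:ℝ) < (α j : ℝ) := fun j => by exact_mod_cast hα j
  have hd0 : (0:ℝ) < d := by exact_mod_cast (by omega : 0 < d)
  have hn0 : (0:ℝ) < n := by exact_mod_cast (by omega : 0 < n)
  obtain ⟨hj1, hj2⟩ := jensen_log hn α hα hd
  set P : ℝ := ∏ j, (α j : ℝ) ^ α j with hPdef
  have hP0 : 0 < P := Finset.prod_pos fun j _ => pow_pos (hα0 j) _
  set u : ℝ := P ^ ((1:ℝ)/(d:ℝ)) with hudef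
  have hu0 : 0 < u := Real.rpow_pos_of_pos hP0 _
  have hud : u ^ d = P := by
    rw [hudef, ← Real.rpow_natCast (P ^ ((1:ℝ)/(d:ℝ))) d, ← Real.rpow_mul hP0.le]
    rw [show (1/(d:ℝ)) * (d:ℕ) = 1 by field_simp, Real.rpow_one]
  set t : ℝ := u / d with htdef
  have htd : t ^ d = P / (d:ℝ)^d := by rw [htdef, div_pow, hud]
  have hBt : u / (d:ℝ) - P / (d:ℝ)^d = t - t^d := by rw [htd, htdef]
  -- Key1 : d * t^(d-1) ≤ 1
  have hPnat : P = ((∏ j, α j ^ α j : ℕ) : ℝ) := by rw [hPdef]; push_cast; rfl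
  have hukey : u ^ (d-1) ≤ (d:ℝ) ^ (d-2) := by
    apply le_of_pow_le_pow_left₀ (by omega : d ≠ 0) (by positivity)
    calc (u ^ (d-1)) ^ d = (u ^ d) ^ (d-1) := by
          rw [← pow_mul, ← pow_mul, mul_comm]
      _ = P ^ (d-1) := by rw [hud]
      _ ≤ ((d:ℝ) ^ ((d-2)*d)) := by
          rw [hPnat]
          exact_mod_cast natkey hn α hα hd hd2
      _ = ((d:ℝ) ^ (d-2)) ^ d := by rw [← pow_mul]
  have key1 : (d:ℝ) * t ^ (d-1) ≤ 1 := by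
    rw [htdef, div_pow, mul_div_assoc']
    rw [div_le_one (by positivity)]
    calc (d:ℝ) * u ^ (d-1) ≤ (d:ℝ) * (d:ℝ)^(d-2) :=
          mul_le_mul_of_nonneg_left hukey hd0.le
      _ = (d:ℝ)^(d-1) := by rw [← pow_succ']; congr 1; omega
  -- Key2 : 1/n ≤ t, strict if α not constant
  have hlogu : Real.log u = (1/(d:ℝ)) * Real.log P := Real.log_rpow hP0 _
  have hlogdn : Real.log ((d:ℝ)/n) = - Real.log ((n:ℝ)/d) := by
    rw [← Real.log_inv]; congr 1; rw [inv_div]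

  have key2 : 1/(n:ℝ) ≤ t := by
    have h : Real.log ((d:ℝ)/n) ≤ Real.log u := by rw [hlogdn, hlogu]; linarith [hj1]
    have h2 : (d:ℝ)/n ≤ u := (Real.log_le_log_iff (by positivity) hu0).mp h
    calc 1/(n:ℝ) = ((d:ℝ)/n)/d := by field_simp
      _ ≤ u / d := by gcongr
  have key2s : (∃ i j, α i ≠ α j) → 1/(n:ℝ) < t := fun hne => by
    have h : Real.log ((d:ℝ)/n) < Real.log u := by rw [hlogdn, hlogu]; linarith [hj2 hne]
    have h2 : (d:ℝ)/n < u := (Real.log_lt_log_iff (by positivity) hu0).mp h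
    calc 1/(n:ℝ) = ((d:ℝ)/n)/d := by field_simp
      _ < u / d := by gcongr
  -- per-point facts about the min
  have hmfacts : ∀ x : Fin n → ℝ, (∀ j, 0 ≤ x j) → ∑ j, x j ≤ 1 →
      (0 ≤ ⨅ j, x j) ∧ (⨅ j, x j) ≤ 1/(n:ℝ) ∧
      (⨅ j, x j) - ∏ j, x j ^ α j ≤ (⨅ j, x j) - (⨅ j, x j)^d := by
    intro x hx hsx
    have hbdd : BddBelow (Set.range x) := Set.Finite.bddBelow (Set.finite_range x)
    have hm0 : 0 ≤ ⨅ j, x j := le_ciInf hx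
    have hmle : ∀ j, (⨅ j, x j) ≤ x j := fun j => ciInf_le hbdd j
    have hmn : (⨅ j, x j) ≤ 1/(n:ℝ) := by
      have h1 : (n:ℝ) * (⨅ j, x j) ≤ ∑ j, x j := by
        have := Finset.card_nsmul_le_sum Finset.univ x (⨅ j, x j) (fun i _ => hmle i)
        rwa [Finset.card_univ, Fintype.card_fin, nsmul_eq_mul] at this
      rw [le_div_iff₀ hn0]
      nlinarith
    have hprod : (⨅ j, x j)^d ≤ ∏ j, x j ^ α j := by
      rw [hd, ← Finset.prod_pow_eq_pow_sum]
      exact Finset.prod_le_prod (fun j _ => by positivity)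
        (fun j _ => pow_le_pow_left₀ hm0 (hmle j) _)
    exact ⟨hm0, hmn, by linarith⟩
  -- part 1
  have part1 : ∀ x : Fin n → ℝ, (∀ j, 0 ≤ x j) → ∑ j, x j ≤ 1 →
      (⨅ j, x j) - ∏ j, x j ^ α j ≤ u / (d:ℝ) - P / (d:ℝ)^d := by
    intro x hx hsx
    obtain ⟨hm0, hmn, hval⟩ := hmfacts x hx hsx
    have h2 : (⨅ j, x j) - (⨅ j, x j)^d ≤ t - t^d :=
      fmono hd2 hm0 (hmn.trans key2) key1
    rw [hBt]
    linarith
  refine ⟨part1, ?_⟩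
  -- bound at 1/n
  have hKey1n : (d:ℝ) * ((1/(n:ℝ)) ^ (d-1)) ≤ 1 := by
    have h : ((1:ℝ)/n)^(d-1) ≤ t^(d-1) := pow_le_pow_left₀ (by positivity) key2 _
    calc (d:ℝ) * ((1/(n:ℝ)) ^ (d-1)) ≤ (d:ℝ) * t^(d-1) :=
          mul_le_mul_of_nonneg_left h hd0.le
      _ ≤ 1 := key1
  have hub1n : ∀ y ∈ ((fun x : Fin n → ℝ => (⨅ j, x j) - ∏ j, x j ^ α j) ''
      {x : Fin n → ℝ | (∀ j, 0 ≤ x j) ∧ ∑ j, x j ≤ 1}),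
      y ≤ 1/(n:ℝ) - (1/(n:ℝ))^d := by
    rintro y ⟨x, hxmem, rfl⟩
    obtain ⟨hm0, hmn, hval⟩ := hmfacts x hxmem.1 hxmem.2
    have := fmono hd2 hm0 hmn hKey1n
    dsimp only
    linarith
  have h0n : (0:ℝ) ≤ 1/(n:ℝ) - (1/(n:ℝ))^d := by
    have := fmono hd2 le_rfl (by positivity : (0:ℝ) ≤ 1/(n:ℝ)) hKey1n
    have hz : (0:ℝ)^d = 0 := zero_pow (by omega : d ≠ 0)
    linarith [this, hz.ge, hz.le]
  constructor
  · intro hsup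
    by_contra hnc
    push_neg at hnc
    have hlt := key2s hnc
    have h1 : sSup ((fun x : Fin n → ℝ => (⨅ j, x j) - ∏ j, x j ^ α j) ''
        {x : Fin n → ℝ | (∀ j, 0 ≤ x j) ∧ ∑ j, x j ≤ 1}) ≤ 1/(n:ℝ) - (1/(n:ℝ))^d :=
      Real.sSup_le hub1n h0n
    have h2 : 1/(n:ℝ) - (1/(n:ℝ))^d < t - t^d :=
      fmono_strict hd2 (by positivity) hlt key1
    rw [hsup] at h1
    rw [hBt] at h1
    linarith
  · intro hconst
    set a := α ⟨0, by omega⟩ with hadef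
    have haj : ∀ j, α j = a := fun j => hconst j ⟨0, by omega⟩
    have hda : d = n * a := by
      rw [hd, Finset.sum_congr rfl (fun j _ => haj j), Finset.sum_const,
        Finset.card_univ, Fintype.card_fin, smul_eq_mul]
    have ha1 : 1 ≤ a := hα _
    have ha0 : (0:ℝ) < a := by exact_mod_cast ha1
    have hPa : P = (a:ℝ)^d := by
      rw [hPdef]
      calc ∏ j, (α j : ℝ)^(α j) = ∏ _j : Fin n, (a:ℝ)^a :=
            Finset.prod_congr rfl fun j _ => by rw [haj j]
        _ = ((a:ℝ)^a)^n := by rw [Finset.prod_const, Finset.card_univ, Fintype.card_fin]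
        _ = (a:ℝ)^d := by rw [← pow_mul, hda]; congr 1; ring
    have hua : u = (a:ℝ) := by
      rw [hudef, hPa, ← Real.rpow_natCast (a:ℝ) d, ← Real.rpow_mul ha0.le]
      rw [show (d:ℕ) * ((1:ℝ)/(d:ℝ)) = 1 by field_simp, Real.rpow_one]
    have hta : t = 1/(n:ℝ) := by
      rw [htdef, hua, hda]
      have hcast : ((n * a : ℕ) : ℝ) = (n:ℝ) * (a:ℝ) := by push_cast; ring
      rw [hcast]
      field_simp
    have hBval : u / (d:ℝ) - P/(d:ℝ)^d = 1/(n:ℝ) - (1/(n:ℝ))^d := by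
      rw [hBt, hta]
    rw [hBval]
    apply le_antisymm
    · exact Real.sSup_le hub1n h0n
    · apply le_csSup
      · exact ⟨1/(n:ℝ) - (1/(n:ℝ))^d, fun y hy => hub1n y hy⟩
      · refine ⟨fun _ => 1/(n:ℝ), ⟨fun j => by positivity, ?_⟩, ?_⟩
        · rw [Finset.sum_const, Finset.card_univ, Fintype.card_fin, nsmul_eq_mul]
          rw [mul_one_div, div_self hn0.ne']
        · show (⨅ _j : Fin n, (1/(n:ℝ))) - ∏ j, (1/(n:ℝ))^(α j) = 1/(n:ℝ) - (1/(n:ℝ))^d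
          rw [ciInf_const, Finset.prod_pow_eq_pow_sum, ← hd]
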